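/- arXiv:1601.06264 — 2 statements merged into one kernel-verified Lean document; each statement's English description precedes it below -/
import Mathlib

section
/- Let P ∈ ℂ[X₁,…,Xₙ] and let Λ : ℂ[X₁,…,Xₙ] → ℂ be a positive definite linear functional. Then Λ vanishes on the ideal (P) generated by P if and only if Λ vanishes on the ideal (P*P) generated by P*P. -/
open MeasureTheory
open scoped ComplexOrder

noncomputable def evalC {n : ℕ} (P : MvPolynomial (Fin n) ℂ) (x : Fin n → ℝ) : ℂ :=
  MvPolynomial.aeval (fun i => (x i : ℂ)) P

noncomputable def starC {n : ℕ} (P : MvPolynomial (Fin n) ℂ) : MvPolynomial (Fin n) ℂ :=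
  MvPolynomial.map (starRingEnd ℂ) P

def IsPosDefC {n : ℕ} (Λ : MvPolynomial (Fin n) ℂ →ₗ[ℂ] ℂ) : Prop :=
  ∀ P : MvPolynomial (Fin n) ℂ, 0 ≤ Λ (starC P * P)

def IsMomentC {n : ℕ} (Λ : MvPolynomial (Fin n) ℂ →ₗ[ℂ] ℂ) : Prop :=
  ∃ μ : Measure (Fin n → ℝ),
    (∀ Q : MvPolynomial (Fin n) ℂ, Integrable (fun x => evalC Q x) μ) ∧
    (∀ Q : MvPolynomial (Fin n) ℂ, Λ Q = ∫ x, evalC Q x ∂μ)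

noncomputable def vanishingIdealC {n : ℕ} (Z : Set (Fin n → ℝ)) :
    Ideal (MvPolynomial (Fin n) ℂ) where
  carrier := {P | ∀ x ∈ Z, evalC P x = 0}
  add_mem' := by
    intro a b ha hb x hx
    simp only [Set.mem_setOf_eq, evalC, map_add] at *
    rw [ha x hx, hb x hx, add_zero]
  zero_mem' := by
    intro x hx
    simp [evalC]
  smul_mem' := by
    intro c a ha x hx
    simp only [Set.mem_setOf_eq, evalC, smul_eq_mul, map_mul] at *
    rw [ha x hx, mul_zero]

def zeroSetC {n : ℕ} (I : Ideal (MvPolynomial (Fin n) ℂ)) : Set (Fin n → ℝ) :=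
  {x | ∀ P ∈ I, evalC P x = 0}

def zSetC {n : ℕ} (P : MvPolynomial (Fin n) ℂ) : Set (Fin n → ℝ) :=
  {x | evalC P x = 0}

def VanishesOnC {n : ℕ} (Λ : MvPolynomial (Fin n) ℂ →ₗ[ℂ] ℂ)
    (I : Ideal (MvPolynomial (Fin n) ℂ)) : Prop :=
  ∀ P ∈ I, Λ P = 0

def nSetC {n : ℕ} (Λ : MvPolynomial (Fin n) ℂ →ₗ[ℂ] ℂ) : Set (MvPolynomial (Fin n) ℂ) :=
  {P | Λ (starC P * P) = 0}

def IsTypeAC {n : ℕ} (P : MvPolynomial (Fin n) ℂ) : Prop :=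
  ∀ Λ : MvPolynomial (Fin n) ℂ →ₗ[ℂ] ℂ,
    IsPosDefC Λ → VanishesOnC Λ (Ideal.span {P}) → IsMomentC Λ


lemma key {n : ℕ} (Λ : MvPolynomial (Fin n) ℂ →ₗ[ℂ] ℂ)
    (hΛ : IsPosDefC Λ)
    (P : MvPolynomial (Fin n) ℂ) (hP : Λ (starC P * P) = 0)
    (A : MvPolynomial (Fin n) ℂ) : Λ (starC A * P) = 0 := by
  simp only [starC, IsPosDefC] at *
  set sA := MvPolynomial.map (starRingEnd ℂ) A with hsA
  set sP := MvPolynomial.map (starRingEnd ℂ) P with hsP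
  set a := Λ (sA * P) with ha
  set b := Λ (sP * A) with hb
  set c := Λ (sA * A) with hc
  have expand : ∀ t : ℂ, 0 ≤ c + t * a + (starRingEnd ℂ) t * b := by
    intro t
    have h := hΛ (A + MvPolynomial.C t * P)
    have hs : MvPolynomial.map (starRingEnd ℂ) (A + MvPolynomial.C t * P)
        = sA + MvPolynomial.C ((starRingEnd ℂ) t) * sP := by
      simp [hsA, hsP]
    rw [hs] at h
    have hprod : (sA + MvPolynomial.C ((starRingEnd ℂ) t) * sP) * (A + MvPolynomial.C t * P)
        = sA * A + t • (sA * P) + (starRingEnd ℂ) t • (sP * A)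
          + ((starRingEnd ℂ) t * t) • (sP * P) := by
      simp only [MvPolynomial.smul_eq_C_mul, map_mul]
      ring
    rw [hprod] at h
    simp only [map_add, _root_.map_smul, smul_eq_mul, hP, mul_zero, add_zero] at h
    exact h
  have hc0 : 0 ≤ c.re ∧ c.im = 0 := by
    have := expand 0
    rw [Complex.le_def] at this
    constructor
    · simpa using this.1
    · simpa using this.2.symm
  have hconj : b = (starRingEnd ℂ) a := by
    have h1 := expand 1
    have h2 := expand Complex.I
    rw [Complex.le_def] at h1 h2
    simp only [Complex.add_im, Complex.mul_im, Complex.one_re, Complex.one_im,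
      map_one, Complex.I_re, Complex.I_im, Complex.conj_I, Complex.zero_im,
      Complex.neg_im, Complex.neg_re] at h1 h2
    apply Complex.ext
    · rw [Complex.conj_re]; linarith [h1.2, h2.2, hc0.2]
    · rw [Complex.conj_im]; linarith [h1.2, h2.2, hc0.2]
  by_contra hne
  have hna : 0 < Complex.normSq a := by
    simpa [Complex.normSq_pos] using hne
  set r : ℝ := (c.re + 1) / Complex.normSq a with hr
  have h := expand (-(r : ℂ) * (starRingEnd ℂ) a)
  rw [hconj, ← map_mul] at h
  have hta : (-(r : ℂ) * (starRingEnd ℂ) a) * a = (-(r * Complex.normSq a) : ℝ) := by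
    rw [mul_assoc, mul_comm ((starRingEnd ℂ) a) a, Complex.mul_conj]
    push_cast
    ring
  rw [hta] at h
  rw [Complex.le_def] at h
  have hre := h.1
  simp only [Complex.add_re, Complex.conj_re, Complex.ofReal_re, Complex.zero_re] at hre
  have : c.re - 2 * (r * Complex.normSq a) ≥ 0 := by linarith
  have hrval : r * Complex.normSq a = c.re + 1 := by
    rw [hr]
    field_simp [hna.ne']
  nlinarith [hc0.1]


lemma starC_starC {n : ℕ} (Q : MvPolynomial (Fin n) ℂ) : starC (starC Q) = Q := by
  unfold starC
  rw [MvPolynomial.map_map]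
  have : (starRingEnd ℂ).comp (starRingEnd ℂ) = RingHom.id ℂ :=
    RingHom.ext fun z => Complex.conj_conj z
  rw [this, MvPolynomial.map_id]

theorem stmt_14 (n : ℕ) (hn : 0 < n) (P : MvPolynomial (Fin n) ℂ)
    (Λ : MvPolynomial (Fin n) ℂ →ₗ[ℂ] ℂ) (hΛ : IsPosDefC Λ) :
    VanishesOnC Λ (Ideal.span {P}) ↔ VanishesOnC Λ (Ideal.span {starC P * P}) := by
  constructor
  · intro h R hR
    apply h
    rw [Ideal.mem_span_singleton] at hR ⊢
    exact dvd_trans (Dvd.intro_left _ rfl) hR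
  · intro h R hR
    rw [Ideal.mem_span_singleton] at hR
    obtain ⟨Q, hQ⟩ := hR
    have hP0 : Λ (starC P * P) = 0 :=
      h _ (Ideal.mem_span_singleton_self _)
    have := key Λ hΛ P hP0 (starC Q)
    rw [starC_starC] at this
    rw [hQ, mul_comm]
    exact this
end

section
/- Let I be a proper set ideal of ℂ[X₁,…,Xₙ], i.e., a proper ideal of the form I = I_ℂ(Z) for some subset Z of ℝⁿ. Then there exists a moment functional Λ on ℂ[X₁,…,Xₙ] such that N(Λ) = I. -/
open MeasureTheory
open scoped ComplexOrder

namespace Stmt17Aux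

variable {n : ℕ}

lemma evalC_eval (P : MvPolynomial (Fin n) ℂ) (x : Fin n → ℝ) :
    evalC P x = MvPolynomial.eval (fun i => (x i : ℂ)) P := by
  rw [evalC, MvPolynomial.aeval_def, ← MvPolynomial.eval₂_id]
  rfl

lemma continuous_evalC (P : MvPolynomial (Fin n) ℂ) : Continuous fun x => evalC P x := by
  have h1 : Continuous fun x : Fin n → ℝ => (fun i => (x i : ℂ)) :=
    continuous_pi fun i => Complex.continuous_ofReal.comp (continuous_apply i)
  have h2 := (MvPolynomial.continuous_eval (p := P)).comp h1
  exact h2.congr fun x => (evalC_eval P x).symm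

lemma evalC_starC (P : MvPolynomial (Fin n) ℂ) (x : Fin n → ℝ) :
    evalC (starC P) x = (starRingEnd ℂ) (evalC P x) := by
  rw [evalC_eval, evalC_eval, starC, MvPolynomial.eval_map]
  have h := MvPolynomial.eval₂_comp_left (starRingEnd ℂ) (RingHom.id ℂ)
    (fun i => ((x i : ℂ))) P
  rw [MvPolynomial.eval₂_id, RingHom.comp_id] at h
  rw [h]
  congr 1
  funext i
  simp [Complex.conj_ofReal]

lemma evalC_poly_bound (Q : MvPolynomial (Fin n) ℂ) :
    ∃ C : ℝ, 0 ≤ C ∧ ∃ d : ℕ, ∀ x : Fin n → ℝ, ‖evalC Q x‖ ≤ C * (1 + ‖x‖) ^ d := by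
  induction Q using MvPolynomial.induction_on with
  | C a =>
      refine ⟨‖a‖, norm_nonneg a, 0, fun x => ?_⟩
      simp [evalC]
  | add p q hp hq =>
      obtain ⟨C1, hC1, d1, h1⟩ := hp
      obtain ⟨C2, hC2, d2, h2⟩ := hq
      refine ⟨C1 + C2, by positivity, max d1 d2, fun x => ?_⟩
      have hb : (1:ℝ) ≤ 1 + ‖x‖ := le_add_of_nonneg_right (norm_nonneg x)
      have e1 : (1+‖x‖)^d1 ≤ (1+‖x‖)^(max d1 d2) := pow_le_pow_right₀ hb (le_max_left _ _)
      have e2 : (1+‖x‖)^d2 ≤ (1+‖x‖)^(max d1 d2) := pow_le_pow_right₀ hb (le_max_right _ _)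
      have hadd : evalC (p + q) x = evalC p x + evalC q x := by simp [evalC]
      calc ‖evalC (p+q) x‖ ≤ ‖evalC p x‖ + ‖evalC q x‖ := by rw [hadd]; exact norm_add_le _ _
        _ ≤ C1 * (1+‖x‖)^(max d1 d2) + C2 * (1+‖x‖)^(max d1 d2) :=
            add_le_add ((h1 x).trans (mul_le_mul_of_nonneg_left e1 hC1))
              ((h2 x).trans (mul_le_mul_of_nonneg_left e2 hC2))
        _ = (C1+C2) * (1+‖x‖)^(max d1 d2) := by ring
  | mul_X p i hp =>
      obtain ⟨C, hC, d, h⟩ := hp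
      refine ⟨C, hC, d+1, fun x => ?_⟩
      have hmul : evalC (p * MvPolynomial.X i) x = evalC p x * (x i : ℂ) := by simp [evalC]
      rw [hmul, norm_mul]
      have hxi : ‖((x i : ℂ))‖ ≤ 1 + ‖x‖ := by
        rw [Complex.norm_real]
        exact (norm_le_pi_norm x i).trans (by linarith [norm_nonneg x])
      calc ‖evalC p x‖ * ‖((x i : ℂ))‖ ≤ (C * (1+‖x‖)^d) * (1+‖x‖) :=
          mul_le_mul (h x) hxi (norm_nonneg _) (by positivity)
        _ = C * (1+‖x‖)^(d+1) := by ring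

lemma evalC_exp_bound (Q : MvPolynomial (Fin n) ℂ) :
    ∃ C : ℝ, 0 ≤ C ∧ ∀ x : Fin n → ℝ, ‖evalC Q x‖ ≤ C * Real.exp ‖x‖ := by
  obtain ⟨C, hC, d, h⟩ := evalC_poly_bound Q
  refine ⟨C * (d.factorial * Real.exp 1), by positivity, fun x => ?_⟩
  have ht : (0:ℝ) ≤ 1 + ‖x‖ := by positivity
  have hd : (0:ℝ) < d.factorial := by exact_mod_cast d.factorial_pos
  have key : (1 + ‖x‖)^d ≤ d.factorial * Real.exp 1 * Real.exp ‖x‖ := by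
    have h1 : (1+‖x‖)^d / d.factorial ≤ Real.exp (1 + ‖x‖) := by
      refine le_trans ?_ (Real.sum_le_exp_of_nonneg ht (d+1))
      exact Finset.single_le_sum (f := fun i => (1+‖x‖)^i / i.factorial)
        (fun i _ => by positivity) (Finset.self_mem_range_succ d)
    rw [Real.exp_add] at h1
    calc (1+‖x‖)^d = ((1+‖x‖)^d / d.factorial) * d.factorial := by field_simp
      _ ≤ (Real.exp 1 * Real.exp ‖x‖) * d.factorial := mul_le_mul_of_nonneg_right h1 hd.le
      _ = d.factorial * Real.exp 1 * Real.exp ‖x‖ := by ring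
  calc ‖evalC Q x‖ ≤ C * (1+‖x‖)^d := h x
    _ ≤ C * (d.factorial * Real.exp 1 * Real.exp ‖x‖) := mul_le_mul_of_nonneg_left key hC
    _ = C * (d.factorial * Real.exp 1) * Real.exp ‖x‖ := by ring

lemma mem_vanishingIdealC {Z : Set (Fin n → ℝ)} {P : MvPolynomial (Fin n) ℂ} :
    P ∈ vanishingIdealC Z ↔ ∀ x ∈ Z, evalC P x = 0 := Iff.rfl

end Stmt17Aux

open Stmt17Aux

theorem stmt_17 (n : ℕ) (hn : 0 < n) (I : Ideal (MvPolynomial (Fin n) ℂ))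
    (hproper : I ≠ ⊤) (Z : Set (Fin n → ℝ)) (hI : I = vanishingIdealC Z) :
    ∃ Λ : MvPolynomial (Fin n) ℂ →ₗ[ℂ] ℂ, IsMomentC Λ ∧
      nSetC Λ = (I : Set (MvPolynomial (Fin n) ℂ)) := by
  classical
  -- Z is nonempty
  have hZne : Z.Nonempty := by
    rcases Z.eq_empty_or_nonempty with h | h
    · exfalso
      apply hproper
      rw [hI, Ideal.eq_top_iff_one, mem_vanishingIdealC, h]
      intro x hx
      exact absurd hx (Set.notMem_empty x)
    · exact h
  -- countable dense subset of Z
  have : Nonempty (↥Z) := hZne.to_subtype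
  obtain ⟨s, hsc, hsd⟩ := TopologicalSpace.exists_countable_dense (↥Z)
  obtain ⟨y0, hy0⟩ := hsd.nonempty
  have hDne : (Subtype.val '' s : Set (Fin n → ℝ)).Nonempty := ⟨y0, y0, hy0, rfl⟩
  obtain ⟨f, hfD⟩ := (hsc.image _).exists_eq_range hDne
  have hfZ : ∀ k, f k ∈ Z := by
    intro k
    have : f k ∈ Subtype.val '' s := hfD ▸ Set.mem_range_self k
    rcases this with ⟨⟨y, hy⟩, -, rfl⟩
    exact hy
  have hZcl : Z ⊆ closure (Set.range f) := by
    intro x hx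
    have h1 : (⟨x, hx⟩ : ↥Z) ∈ closure s := hsd _
    have h2 := closure_subtype.mp h1
    rwa [← hfD]
  -- the measure
  set c : ℕ → ℝ := fun k => (1/2 : ℝ)^k * Real.exp (-‖f k‖) with hc
  have hcpos : ∀ k, 0 < c k := fun k => mul_pos (by positivity) (Real.exp_pos _)
  set μ : Measure (Fin n → ℝ) :=
    Measure.sum (fun k => ENNReal.ofReal (c k) • Measure.dirac (f k)) with hμ
  -- uniform geometric bound
  have key : ∀ Q : MvPolynomial (Fin n) ℂ, ∃ C : ℝ, 0 ≤ C ∧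
      ∀ k, c k * ‖evalC Q (f k)‖ ≤ C * (1/2)^k := by
    intro Q
    obtain ⟨C, hC0, hC⟩ := evalC_exp_bound Q
    refine ⟨C, hC0, fun k => ?_⟩
    have hx : Real.exp (-‖f k‖) * Real.exp ‖f k‖ = 1 := by
      rw [← Real.exp_add]; simp
    calc c k * ‖evalC Q (f k)‖ ≤ c k * (C * Real.exp ‖f k‖) :=
          mul_le_mul_of_nonneg_left (hC (f k)) (hcpos k).le
      _ = C * (1/2)^k * (Real.exp (-‖f k‖) * Real.exp ‖f k‖) := by rw [hc]; ring
      _ = C * (1/2)^k := by rw [hx, mul_one]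
  -- integrability
  have hInt : ∀ Q : MvPolynomial (Fin n) ℂ, Integrable (fun x => evalC Q x) μ := by
    intro Q
    obtain ⟨C, hC0, hCk⟩ := key Q
    refine ⟨(continuous_evalC Q).aestronglyMeasurable, ?_⟩
    rw [HasFiniteIntegral, hμ, lintegral_sum_measure]
    have hterm : ∀ k, ∫⁻ x, ‖evalC Q x‖₊ ∂(ENNReal.ofReal (c k) • Measure.dirac (f k))
        = ENNReal.ofReal (c k * ‖evalC Q (f k)‖) := by
      intro k
      rw [lintegral_smul_measure, lintegral_dirac,
        ← enorm_eq_nnnorm, ← ofReal_norm, smul_eq_mul, ← ENNReal.ofReal_mul (hcpos k).le]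
    calc ∑' k, ∫⁻ x, ‖evalC Q x‖₊ ∂(ENNReal.ofReal (c k) • Measure.dirac (f k))
        ≤ ∑' k : ℕ, ENNReal.ofReal C * (ENNReal.ofReal (1/2))^k := by
          refine ENNReal.tsum_le_tsum fun k => ?_
          rw [hterm k, ← ENNReal.ofReal_pow (by norm_num), ← ENNReal.ofReal_mul hC0]
          exact ENNReal.ofReal_le_ofReal (hCk k)
      _ = ENNReal.ofReal C * ∑' k : ℕ, (ENNReal.ofReal (1/2))^k := ENNReal.tsum_mul_left
      _ < ⊤ := by
          apply ENNReal.mul_lt_top ENNReal.ofReal_lt_top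
          rw [ENNReal.tsum_geometric, ENNReal.inv_lt_top]
          refine tsub_pos_of_lt ?_
          rw [ENNReal.ofReal_lt_one]
          norm_num
  -- integral formula
  have hIntEq : ∀ Q : MvPolynomial (Fin n) ℂ,
      ∫ x, evalC Q x ∂μ = ∑' k, (c k) • evalC Q (f k) := by
    intro Q
    rw [hμ, integral_sum_measure (hμ ▸ hInt Q)]
    congr 1
    funext k
    rw [integral_smul_measure, integral_dirac, ENNReal.toReal_ofReal (hcpos k).le]
  -- the functional
  have hadd : ∀ P Q : MvPolynomial (Fin n) ℂ, (fun x => evalC (P + Q) x)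
      = fun x => evalC P x + evalC Q x := by
    intro P Q; funext x; simp [evalC]
  have hsmul : ∀ (a : ℂ) (Q : MvPolynomial (Fin n) ℂ), (fun x => evalC (a • Q) x)
      = fun x => a • evalC Q x := by
    intro a Q; funext x; simp [evalC]
  refine ⟨{ toFun := fun Q => ∫ x, evalC Q x ∂μ,
            map_add' := fun P Q => by
              show ∫ x, evalC (P + Q) x ∂μ = (∫ x, evalC P x ∂μ) + ∫ x, evalC Q x ∂μ
              rw [hadd]; exact integral_add (hInt P) (hInt Q),
            map_smul' := fun a Q => by
              show ∫ x, evalC (a • Q) x ∂μ = a • ∫ x, evalC Q x ∂μ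
              rw [hsmul]; exact integral_smul a _ }, ⟨μ, hInt, fun Q => rfl⟩, ?_⟩
  ext P
  simp only [nSetC, Set.mem_setOf_eq, LinearMap.coe_mk, AddHom.coe_mk, SetLike.mem_coe]
  -- value of the integrand
  have hval : ∀ x, evalC (starC P * P) x = ((Complex.normSq (evalC P x) : ℝ) : ℂ) := by
    intro x
    have h1 : evalC (starC P * P) x = evalC (starC P) x * evalC P x := by simp [evalC]
    rw [h1, evalC_starC, Complex.normSq_eq_conj_mul_self]
  set g : ℕ → ℝ := fun k => c k * Complex.normSq (evalC P (f k)) with hg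
  have hnorm : ∀ k, ‖evalC (starC P * P) (f k)‖ = Complex.normSq (evalC P (f k)) := by
    intro k
    rw [hval, Complex.norm_real]
    exact abs_of_nonneg (Complex.normSq_nonneg _)
  have hgnonneg : ∀ k, 0 ≤ g k := fun k =>
    mul_nonneg (hcpos k).le (Complex.normSq_nonneg _)
  have hgsum : Summable g := by
    obtain ⟨C, hC0, hCk⟩ := key (starC P * P)
    refine Summable.of_nonneg_of_le hgnonneg (fun k => ?_)
      ((summable_geometric_of_lt_one (r := (1/2 : ℝ)) (by norm_num) (by norm_num)).mul_left C)
    have := hCk k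
    rwa [hnorm k] at this
  have hΛeq : ∫ x, evalC (starC P * P) x ∂μ = ((∑' k, g k : ℝ) : ℂ) := by
    rw [hIntEq, Complex.ofReal_tsum]
    congr 1
    funext k
    rw [hval]
    simp only [hg, Complex.real_smul, Complex.ofReal_mul]
  rw [hΛeq, Complex.ofReal_eq_zero]
  constructor
  · intro h0
    have hk : ∀ k, evalC P (f k) = 0 := by
      intro k
      have hle : g k ≤ 0 := h0 ▸ Summable.le_tsum hgsum k (fun j _ => hgnonneg j)
      have : g k = 0 := le_antisymm hle (hgnonneg k)
      have h2 : Complex.normSq (evalC P (f k)) = 0 := by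
        rcases mul_eq_zero.mp this with h | h
        · exact absurd h (hcpos k).ne'
        · exact h
      exact Complex.normSq_eq_zero.mp h2
    rw [hI, mem_vanishingIdealC]
    intro x hx
    have hcl : IsClosed {y : Fin n → ℝ | evalC P y = 0} :=
      isClosed_eq (continuous_evalC P) continuous_const
    have hsub : closure (Set.range f) ⊆ {y | evalC P y = 0} :=
      closure_minimal (by rintro _ ⟨k, rfl⟩; exact hk k) hcl
    exact hsub (hZcl hx)
  · intro hP
    have hk : ∀ k, evalC P (f k) = 0 := by
      intro k
      rw [hI, mem_vanishingIdealC] at hP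
      exact hP (f k) (hfZ k)
    have : g = fun _ => 0 := by
      funext k; simp [hg, hk k]
    rw [this]
    exact tsum_zero
end
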